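/- Let T be a tournament, fix t ≥ 1 and a function s with s(t) ≥ t² · s(t−1) + t. Call an arc e t-heavy if T[N(e)] contains a set S with |S| ≤ s(t−1) and χ⃗(T[S]) ≥ t−1 (and T[S] strongly connected), and suppose T contains no set of size at most s(t) with chromatic number ≥ t. Let G_H be the undirected graph on V(T) whose edges are the t-heavy arcs. Then G_H contains no clique on t vertices: ω(G_H) ≤ t − 1. -/

import Mathlib

variable {V : Type*}

/-- A tournament: an asymmetric, total relation. -/
def IsTournament (A : V → V → Prop) : Prop :=
  (∀ u v, A u v → ¬ A v u) ∧ (∀ u v, u ≠ v → A u v ∨ A v u)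

/-- For an arc `e = uv`, `N(e) = N⁺(v) ∩ N⁻(u)`: vertices `w` with `v → w → u`. -/
def ArcNbhd (A : V → V → Prop) (u v : V) : Set V := {w | A v w ∧ A w u}

/-- `S` induces an acyclic subdigraph. -/
def AcyclicOn (A : V → V → Prop) (S : Set V) : Prop :=
  ∀ v, ¬ Relation.TransGen (fun x y => x ∈ S ∧ y ∈ S ∧ A x y) v v

/-- The (di)chromatic number of the subdigraph induced on `S` is at most `k`:
`S` is covered by `k` sets, each inducing an acyclic subdigraph. -/
def ChromLE (A : V → V → Prop) (S : Set V) (k : ℕ) : Prop :=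
  ∃ C : Fin k → Set V, (∀ v ∈ S, ∃ i, v ∈ C i) ∧ ∀ i, AcyclicOn A (C i ∩ S)

/-- The (di)chromatic number of the subdigraph induced on `S` is at least `k`. -/
def ChromGE (A : V → V → Prop) (S : Set V) (k : ℕ) : Prop :=
  ∀ m, ChromLE A S m → k ≤ m

/-- Every arc neighborhood has chromatic number at most `t`. -/
def ArcBounded (A : V → V → Prop) (t : ℕ) : Prop :=
  ∀ u v, A u v → ChromLE A (ArcNbhd A u v) t

/-- `P 0, P 1, …, P k` is a directed walk/path. -/
def IsPathOn (A : V → V → Prop) (P : ℕ → V) (k : ℕ) : Prop :=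
  ∀ i < k, A (P i) (P (i + 1))

/-- `P 0, …, P k` is a shortest directed path from `P 0` to `P k`. -/
def IsShortestPath (A : V → V → Prop) (P : ℕ → V) (k : ℕ) : Prop :=
  IsPathOn A P k ∧
    ∀ (m : ℕ) (Q : ℕ → V), Q 0 = P 0 → Q m = P k → IsPathOn A Q m → k ≤ m

def StronglyConnected (A : V → V → Prop) : Prop :=
  ∀ u v : V, Relation.ReflTransGen A u v

def StronglyConnectedOn (A : V → V → Prop) (S : Set V) : Prop :=
  ∀ u ∈ S, ∀ v ∈ S, Relation.ReflTransGen (fun x y => x ∈ S ∧ y ∈ S ∧ A x y) u v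

lemma acyclicOn_mono {A : V → V → Prop} {S T : Set V} (hST : S ⊆ T)
    (h : AcyclicOn A T) : AcyclicOn A S := by
  intro v hv
  exact h v (Relation.TransGen.mono (fun x y ⟨hx, hy, hxy⟩ => ⟨hST hx, hST hy, hxy⟩) v v hv)

theorem stmt15 (A : V → V → Prop) (hT : IsTournament A) (t : ℕ) (ht : 1 ≤ t)
    (s : ℕ → ℕ) (hs : t ^ 2 * s (t - 1) + t ≤ s t)
    (hnocluster : ¬ ∃ S : Finset V, S.card ≤ s t ∧ ChromGE A ↑S t)
    (Heavy : V → V → Prop)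
    (hHeavy : ∀ u v, Heavy u v ↔ A u v ∧ ∃ S : Finset V, ↑S ⊆ ArcNbhd A u v ∧
      S.card ≤ s (t - 1) ∧ ChromGE A ↑S (t - 1) ∧ StronglyConnectedOn A ↑S) :
    ¬ ∃ W : Finset V, W.card = t ∧
      ∀ x ∈ W, ∀ y ∈ W, x ≠ y → Heavy x y ∨ Heavy y x := by
  classical
  rintro ⟨W, hWcard, hWclique⟩
  set F : V × V → Finset V := fun p =>
    if h : Heavy p.1 p.2 then (((hHeavy p.1 p.2).mp h).2).choose else ∅ with hF
  have hFspec : ∀ p : V × V, Heavy p.1 p.2 →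
      ↑(F p) ⊆ ArcNbhd A p.1 p.2 ∧ (F p).card ≤ s (t - 1) ∧
      ChromGE A ↑(F p) (t - 1) ∧ StronglyConnectedOn A ↑(F p) := by
    intro p hp
    have := (((hHeavy p.1 p.2).mp hp).2).choose_spec
    simpa [hF, dif_pos hp] using this
  set U : Finset V := W ∪ (W ×ˢ W).biUnion F with hU
  have hWU : W ⊆ U := Finset.subset_union_left
  have hUcard : U.card ≤ s t := by
    have h1 : ((W ×ˢ W).biUnion F).card ≤ t ^ 2 * s (t - 1) := by
      calc ((W ×ˢ W).biUnion F).card ≤ ∑ p ∈ W ×ˢ W, (F p).card :=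
            Finset.card_biUnion_le
        _ ≤ (W ×ˢ W).card * s (t - 1) := by
            apply Finset.sum_le_card_nsmul
            intro p hp
            by_cases h : Heavy p.1 p.2
            · exact (hFspec p h).2.1
            · simp [hF, dif_neg h]
        _ = t ^ 2 * s (t - 1) := by
            rw [Finset.card_product, hWcard]; ring
    have h2 : U.card ≤ W.card + ((W ×ˢ W).biUnion F).card := Finset.card_union_le _ _
    omega
  apply hnocluster
  refine ⟨U, hUcard, ?_⟩
  intro m hm
  by_contra hmt
  push_neg at hmt
  obtain ⟨C, hcov, hacyc⟩ := hm
  obtain ⟨x0, hx0⟩ : ∃ x, x ∈ W := Finset.Nonempty.exists_mem (Finset.card_pos.mp (by omega))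
  match m, hmt with
  | 0, hmt =>
    obtain ⟨i, _⟩ := hcov x0 (by exact_mod_cast hWU hx0)
    exact i.elim0
  | m' + 1, hmt =>
    set f : V → Fin (m' + 1) := fun x => if h : ∃ i, x ∈ C i then h.choose else 0 with hf
    have hfW : ∀ x ∈ W, x ∈ C (f x) := by
      intro x hx
      have hxU : (x : V) ∈ (↑U : Set V) := by exact_mod_cast hWU hx
      have h : ∃ i, x ∈ C i := hcov x hxU
      simp only [hf, dif_pos h]
      exact h.choose_spec
    have key : ∀ u v, u ∈ W → v ∈ W → Heavy u v → f u = f v → False := by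
      intro u v hu hv hH hfuv
      set i := f u with hi
      have hui : u ∈ C i := hfW u hu
      have hvi : v ∈ C i := by rw [hfuv]; exact hfW v hv
      obtain ⟨hSnbhd, _, hSge, _⟩ := hFspec (u, v) hH
      have hAuv : A u v := ((hHeavy u v).mp hH).1
      set S := F (u, v) with hSdef
      -- S must hit color i
      by_cases hw : ∃ w ∈ (↑S : Set V), w ∈ C i
      · obtain ⟨w, hwS, hwi⟩ := hw
        have hwU : w ∈ (↑U : Set V) := by
          have : w ∈ (W ×ˢ W).biUnion F :=
            Finset.mem_biUnion.mpr ⟨(u, v), Finset.mem_product.mpr ⟨hu, hv⟩, by exact_mod_cast hwS⟩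
          exact_mod_cast Finset.mem_union_right _ this
        have huU : u ∈ (↑U : Set V) := by exact_mod_cast hWU hu
        have hvU : v ∈ (↑U : Set V) := by exact_mod_cast hWU hv
        obtain ⟨hvw, hwu⟩ := hSnbhd hwS
        exact hacyc i u
          (((Relation.TransGen.single
              ⟨⟨hui, huU⟩, ⟨hvi, hvU⟩, hAuv⟩).tail
              ⟨⟨hvi, hvU⟩, ⟨hwi, hwU⟩, hvw⟩).tail
              ⟨⟨hwi, hwU⟩, ⟨hui, huU⟩, hwu⟩)
      · -- recolor S with m' colors, contradiction with ChromGE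
        push_neg at hw
        have hle : ChromLE A (↑S) m' := by
          refine ⟨fun j => C (i.succAbove j), ?_, ?_⟩
          · intro w hwS
            have hwU : w ∈ (↑U : Set V) := by
              have : w ∈ (W ×ˢ W).biUnion F :=
                Finset.mem_biUnion.mpr ⟨(u, v), Finset.mem_product.mpr ⟨hu, hv⟩, by exact_mod_cast hwS⟩
              exact_mod_cast Finset.mem_union_right _ this
            obtain ⟨j, hj⟩ := hcov w hwU
            have hji : j ≠ i := fun h => hw w hwS (h ▸ hj)
            obtain ⟨k, hk⟩ := Fin.exists_succAbove_eq hji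
            exact ⟨k, show w ∈ C (i.succAbove k) by rw [hk]; exact hj⟩
          · intro j
            apply acyclicOn_mono ?_ (hacyc (i.succAbove j))
            intro w ⟨h1, h2⟩
            have hwU : w ∈ (↑U : Set V) := by
              have : w ∈ (W ×ˢ W).biUnion F :=
                Finset.mem_biUnion.mpr ⟨(u, v), Finset.mem_product.mpr ⟨hu, hv⟩, by exact_mod_cast h2⟩
              exact_mod_cast Finset.mem_union_right _ this
            exact ⟨h1, hwU⟩
        have := hSge m' hle
        omega
    obtain ⟨x, hx, y, hy, hxy, hfxy⟩ :=
      Finset.exists_ne_map_eq_of_card_lt_of_maps_to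
        (t := (Finset.univ : Finset (Fin (m' + 1))))
        (by rw [Finset.card_univ, Fintype.card_fin, hWcard]; omega)
        (fun a _ => Finset.mem_univ (f a))
    obtain hH | hH := hWclique x hx y hy hxy
    · exact key x y hx hy hH hfxy
    · exact key y x hy hx hH hfxy.symm
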